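/- With the same hypotheses as in the unfolding induction (equations [S,T^i]=0, ∂_sT^i=∂_{t_i}S, ∂_sU_{-1}=[U_0,S], ∂_{t_i}U_{-1}=[U_0,T^i], ∂_sU_{-2}=[U_{-1},S]−S holding modulo s^{m+1}), one has ∂_s(∂_{t_i}U_{-2} + T^i + [T^i,U_{-1}]) ≡ 0 modulo s^{m+1}. -/

import Mathlib

/-!
Propagation of the residue flatness equation in the `u`-direction in the unfolding
parameter `s`: with `t = (t₁,…,t_n)` and `s` the last of `n+1` formal variables, matrices
`T^i, S, U_k ∈ End_R(H)[[t,s]]` (`H` free over a commutative ℚ-algebra `R`), and the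
relations `[S,T^i] = 0`, `∂_s T^i = ∂_{t_i} S`, `∂_s U_{-1} = [U_0, S]`,
`∂_{t_i} U_{-1} = [U_0, T^i]`, `∂_s U_{-2} = [U_{-1}, S] − S` holding modulo `s^{m+1}`,
one has `∂_s(∂_{t_i} U_{-2} + T^i + [T^i, U_{-1}]) ≡ 0` modulo `s^{m+1}`.
Here `f ≡ g (mod s^{m+1})` means that all coefficients of `s`-degree `≤ m` agree.
-/

noncomputable section

open MvPowerSeries

/-- The formal partial derivative of a multivariate formal power series in the `i`-th
variable, defined coefficientwise. -/
def fpderiv {m : ℕ} {A : Type*} [Ring A] (i : Fin m) (f : MvPowerSeries (Fin m) A) :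
    MvPowerSeries (Fin m) A :=
  fun k => ((k i : ℕ) + 1) • f (k + Finsupp.single i 1)

section Fpd
variable {M : ℕ} {A : Type*} [Ring A]

lemma mvps_apply (f : MvPowerSeries (Fin M) A) (k : Fin M →₀ ℕ) :
    f k = coeff k f := rfl

lemma fpderiv_apply (i : Fin M) (f : MvPowerSeries (Fin M) A) (k : Fin M →₀ ℕ) :
    fpderiv i f k = ((k i : ℕ) + 1) • f (k + Finsupp.single i 1) := rfl

lemma mvps_add_apply (f g : MvPowerSeries (Fin M) A) (k : Fin M →₀ ℕ) :
    (f + g) k = f k + g k := rfl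

lemma mvps_sub_apply (f g : MvPowerSeries (Fin M) A) (k : Fin M →₀ ℕ) :
    (f - g) k = f k - g k := rfl

lemma fpderiv_add (i : Fin M) (f g : MvPowerSeries (Fin M) A) :
    fpderiv i (f + g) = fpderiv i f + fpderiv i g := by
  funext k
  rw [mvps_add_apply (fpderiv i f), fpderiv_apply, fpderiv_apply, fpderiv_apply,
    mvps_add_apply, smul_add]

lemma fpderiv_sub (i : Fin M) (f g : MvPowerSeries (Fin M) A) :
    fpderiv i (f - g) = fpderiv i f - fpderiv i g := by
  funext k
  rw [mvps_sub_apply (fpderiv i f), fpderiv_apply, fpderiv_apply, fpderiv_apply,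
    mvps_sub_apply, smul_sub]

lemma fpderiv_comm (i j : Fin M) (f : MvPowerSeries (Fin M) A) :
    fpderiv i (fpderiv j f) = fpderiv j (fpderiv i f) := by
  funext k
  rw [fpderiv_apply, fpderiv_apply, fpderiv_apply, fpderiv_apply,
    smul_smul, smul_smul, add_right_comm k (Finsupp.single i 1)]
  congr 1
  simp only [Finsupp.add_apply, Finsupp.single_apply]
  rcases eq_or_ne i j with h | h
  · subst h; simp
  · rw [if_neg h, if_neg (Ne.symm h)]; ring

lemma swap_antidiagonal_sum {B : Type*} [AddCommMonoid B] (k : Fin M →₀ ℕ)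
    (F : (Fin M →₀ ℕ) → (Fin M →₀ ℕ) → B) :
    ∑ p ∈ Finset.HasAntidiagonal.antidiagonal k, F p.1 p.2 = ∑ p ∈ Finset.HasAntidiagonal.antidiagonal k, F p.2 p.1 := by
  apply Finset.sum_nbij' (fun p => (p.2, p.1)) (fun p => (p.2, p.1)) <;>
    simp [Finset.HasAntidiagonal.mem_antidiagonal, add_comm]

lemma shift_antidiagonal_sum {B : Type*} [AddCommMonoid B] (i : Fin M) (k : Fin M →₀ ℕ)
    (F : (Fin M →₀ ℕ) → (Fin M →₀ ℕ) → B) :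
    ∑ p ∈ (Finset.HasAntidiagonal.antidiagonal (k + Finsupp.single i 1) :
        Finset ((Fin M →₀ ℕ) × (Fin M →₀ ℕ))), (p.1 i) • F p.1 p.2
      = ∑ p ∈ Finset.HasAntidiagonal.antidiagonal k, ((p.1 i) + 1) • F (p.1 + Finsupp.single i 1) p.2 := by
  classical
  have hfil := Finset.sum_filter_of_ne
    (s := (Finset.HasAntidiagonal.antidiagonal (k + Finsupp.single i 1) :
        Finset ((Fin M →₀ ℕ) × (Fin M →₀ ℕ))))
    (f := fun p => (p.1 i) • F p.1 p.2) (p := fun p => p.1 i ≠ 0)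
    (fun p _ h => by
      intro h0
      exact h (by show (p.1 i) • F p.1 p.2 = 0; rw [h0, zero_smul]))
  rw [← hfil]
  apply Finset.sum_nbij' (fun p => (p.1 - Finsupp.single i 1, p.2))
    (fun p => (p.1 + Finsupp.single i 1, p.2))
  · intro p hp
    simp only [Finset.mem_filter, Finset.HasAntidiagonal.mem_antidiagonal] at hp
    obtain ⟨hp1, hp2⟩ := hp
    have hle : Finsupp.single i 1 ≤ p.1 := by
      rw [Finsupp.single_le_iff]; omega
    rw [Finset.HasAntidiagonal.mem_antidiagonal]
    have h2 : p.1 - Finsupp.single i 1 + p.2 + Finsupp.single i 1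
        = k + Finsupp.single i 1 := by
      rw [add_right_comm, tsub_add_cancel_of_le hle, hp1]
    exact add_right_cancel h2
  · intro p hp
    rw [Finset.HasAntidiagonal.mem_antidiagonal] at hp
    simp only [Finset.mem_filter, Finset.HasAntidiagonal.mem_antidiagonal]
    constructor
    · rw [add_right_comm, hp]
    · simp [Finsupp.add_apply, Finsupp.single_apply]
  · intro p hp
    simp only [Finset.mem_filter, Finset.HasAntidiagonal.mem_antidiagonal] at hp
    have hle : Finsupp.single i 1 ≤ p.1 := by
      rw [Finsupp.single_le_iff]; omega
    simp [tsub_add_cancel_of_le hle]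
  · intro p _
    simp
  · intro p hp
    simp only [Finset.mem_filter, Finset.HasAntidiagonal.mem_antidiagonal] at hp
    have hle : Finsupp.single i 1 ≤ p.1 := by
      rw [Finsupp.single_le_iff]; omega
    have h1 : (p.1 - Finsupp.single i 1 : Fin M →₀ ℕ) i + 1 = p.1 i := by
      simp [Finsupp.tsub_apply, Finsupp.single_apply]
      omega
    rw [h1, tsub_add_cancel_of_le hle]

lemma fpderiv_mul (i : Fin M) (f g : MvPowerSeries (Fin M) A) :
    fpderiv i (f * g) = fpderiv i f * g + f * fpderiv i g := by
  classical
  funext k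
  have hL : fpderiv i (f * g) k
      = ((k i : ℕ) + 1) • ∑ p ∈ (Finset.HasAntidiagonal.antidiagonal (k + Finsupp.single i 1) :
          Finset ((Fin M →₀ ℕ) × (Fin M →₀ ℕ))), coeff p.1 f * coeff p.2 g := by
    rw [fpderiv_apply, mvps_apply (f * g), coeff_mul]
  have hR : (fpderiv i f * g + f * fpderiv i g) k
      = (∑ p ∈ Finset.HasAntidiagonal.antidiagonal k, coeff p.1 (fpderiv i f) * coeff p.2 g)
        + ∑ p ∈ Finset.HasAntidiagonal.antidiagonal k, coeff p.1 f * coeff p.2 (fpderiv i g) := by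
    rw [mvps_add_apply, mvps_apply (fpderiv i f * g), mvps_apply (f * fpderiv i g),
      coeff_mul, coeff_mul]
  rw [hL, hR, Finset.smul_sum]
  have key : ∀ p ∈ (Finset.HasAntidiagonal.antidiagonal (k + Finsupp.single i 1) :
        Finset ((Fin M →₀ ℕ) × (Fin M →₀ ℕ))),
      ((k i : ℕ) + 1) • (coeff p.1 f * coeff p.2 g)
        = (p.1 i) • (coeff p.1 f * coeff p.2 g)
          + (p.2 i) • (coeff p.1 f * coeff p.2 g) := by
    intro p hp
    rw [Finset.HasAntidiagonal.mem_antidiagonal] at hp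
    rw [← add_smul]
    congr 1
    have h2 : (p.1 + p.2) i = (k + Finsupp.single i 1 : Fin M →₀ ℕ) i := by rw [hp]
    simp [Finsupp.add_apply, Finsupp.single_apply] at h2
    omega
  rw [Finset.sum_congr rfl key, Finset.sum_add_distrib]
  congr 1
  · rw [shift_antidiagonal_sum i k (fun p q => coeff p f * coeff q g)]
    apply Finset.sum_congr rfl
    intro p _
    rw [← smul_mul_assoc]
    rfl
  · rw [swap_antidiagonal_sum (k + Finsupp.single i 1)
        (fun p q => (q i) • (coeff p f * coeff q g))]
    rw [shift_antidiagonal_sum i k (fun p q => coeff q f * coeff p g),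
      swap_antidiagonal_sum k
        (fun p q => ((p i) + 1) • (coeff q f * coeff (p + Finsupp.single i 1) g))]
    apply Finset.sum_congr rfl
    intro p _
    rw [← mul_smul_comm]
    rfl

end Fpd

/-- Congruence modulo `s^{m+1}`, where `s` is the last of the `n+1` variables:
all coefficients of `s`-degree `≤ m` agree. -/
def SMod {n : ℕ} {A : Type*} [Ring A] (m : ℕ)
    (f g : MvPowerSeries (Fin (n + 1)) A) : Prop :=
  ∀ k : Fin (n + 1) →₀ ℕ, k (Fin.last n) ≤ m → f k = g k

section SModLemmas
variable {n : ℕ} {A : Type*} [Ring A] {m : ℕ}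
variable {f g f' g' c : MvPowerSeries (Fin (n + 1)) A}

lemma SMod.refl (f : MvPowerSeries (Fin (n + 1)) A) : SMod m f f := fun _ _ => rfl

lemma SMod.of_eq (h : f = g) : SMod m f g := fun k _ => by rw [h]

lemma SMod.trans (h1 : SMod m f g) (h2 : SMod m g f') : SMod m f f' :=
  fun k hk => (h1 k hk).trans (h2 k hk)

lemma SMod.add (h1 : SMod m f g) (h2 : SMod m f' g') : SMod m (f + f') (g + g') :=
  fun k hk => by rw [mvps_add_apply, mvps_add_apply, h1 k hk, h2 k hk]

lemma SMod.sub (h1 : SMod m f g) (h2 : SMod m f' g') : SMod m (f - f') (g - g') :=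
  fun k hk => by rw [mvps_sub_apply, mvps_sub_apply, h1 k hk, h2 k hk]

lemma SMod.mul_left (h : SMod m f g) (c : MvPowerSeries (Fin (n + 1)) A) :
    SMod m (c * f) (c * g) := by
  intro k hk
  rw [mvps_apply (c * f), mvps_apply (c * g), coeff_mul, coeff_mul]
  apply Finset.sum_congr rfl
  intro p hp
  rw [Finset.HasAntidiagonal.mem_antidiagonal] at hp
  congr 1
  have h3 : p.1 (Fin.last n) + p.2 (Fin.last n) = k (Fin.last n) := by
    rw [← Finsupp.add_apply, hp]
  exact h p.2 (by omega)

lemma SMod.mul_right (h : SMod m f g) (c : MvPowerSeries (Fin (n + 1)) A) :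
    SMod m (f * c) (g * c) := by
  intro k hk
  rw [mvps_apply (f * c), mvps_apply (g * c), coeff_mul, coeff_mul]
  apply Finset.sum_congr rfl
  intro p hp
  rw [Finset.HasAntidiagonal.mem_antidiagonal] at hp
  congr 1
  have h3 : p.1 (Fin.last n) + p.2 (Fin.last n) = k (Fin.last n) := by
    rw [← Finsupp.add_apply, hp]
  exact h p.1 (by omega)

lemma SMod.fpd (h : SMod m f g) {i : Fin (n + 1)} (hi : i ≠ Fin.last n) :
    SMod m (fpderiv i f) (fpderiv i g) := by
  intro k hk
  rw [fpderiv_apply, fpderiv_apply]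
  have h' : (k + Finsupp.single i 1 : Fin (n + 1) →₀ ℕ) (Fin.last n) ≤ m := by
    rw [Finsupp.add_apply, Finsupp.single_apply, if_neg hi]
    simpa using hk
  rw [h _ h']

end SModLemmas

theorem stmt7 {n : ℕ} {R : Type*} [CommRing R] [Algebra ℚ R]
    {H : Type*} [AddCommGroup H] [Module R H] [Module.Free R H]
    (m : ℕ)
    (T : Fin n → MvPowerSeries (Fin (n + 1)) (Module.End R H))
    (S : MvPowerSeries (Fin (n + 1)) (Module.End R H))
    (U : ℤ → MvPowerSeries (Fin (n + 1)) (Module.End R H))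
    (hST : ∀ i, SMod m (S * T i - T i * S) 0)
    (hdsT : ∀ i, SMod m (fpderiv (Fin.last n) (T i)) (fpderiv i.castSucc S))
    (hdsU1 : SMod m (fpderiv (Fin.last n) (U (-1))) (U 0 * S - S * U 0))
    (hdtU1 : ∀ i, SMod m (fpderiv i.castSucc (U (-1))) (U 0 * T i - T i * U 0))
    (hdsU2 : SMod m (fpderiv (Fin.last n) (U (-2))) ((U (-1) * S - S * U (-1)) - S)) :
    ∀ i, SMod m
      (fpderiv (Fin.last n)
        (fpderiv i.castSucc (U (-2)) + T i + (T i * U (-1) - U (-1) * T i))) 0 := by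
  intro i
  have hne : (i.castSucc : Fin (n + 1)) ≠ Fin.last n := ne_of_lt (Fin.castSucc_lt_last i)
  set U2 := U (-2)
  set U1 := U (-1)
  set U0 := U 0
  set Ti := T i
  set DS := fpderiv i.castSucc S with hDS
  set Q := U0 * S - S * U0 with hQ
  set R0 := U0 * Ti - Ti * U0 with hR0
  -- step 1: exact rewriting of the derivative
  have e1 : fpderiv (Fin.last n) (fpderiv i.castSucc U2 + Ti + (Ti * U1 - U1 * Ti))
      = fpderiv i.castSucc (fpderiv (Fin.last n) U2) + fpderiv (Fin.last n) Ti
        + ((fpderiv (Fin.last n) Ti * U1 + Ti * fpderiv (Fin.last n) U1)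
          - (fpderiv (Fin.last n) U1 * Ti + U1 * fpderiv (Fin.last n) Ti)) := by
    rw [fpderiv_add, fpderiv_add, fpderiv_sub, fpderiv_mul, fpderiv_mul, fpderiv_comm]
  -- step 2: substitute the flatness hypotheses
  have b1 : SMod m
      (fpderiv i.castSucc (fpderiv (Fin.last n) U2) + fpderiv (Fin.last n) Ti
        + ((fpderiv (Fin.last n) Ti * U1 + Ti * fpderiv (Fin.last n) U1)
          - (fpderiv (Fin.last n) U1 * Ti + U1 * fpderiv (Fin.last n) Ti)))
      (fpderiv i.castSucc ((U1 * S - S * U1) - S) + DS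
        + ((DS * U1 + Ti * Q) - (Q * Ti + U1 * DS))) :=
    ((hdsU2.fpd hne).add (hdsT i)).add
      ((((hdsT i).mul_right U1).add (hdsU1.mul_left Ti)).sub
        (((hdsU1.mul_right Ti)).add ((hdsT i).mul_left U1)))
  -- step 3: expand the inner derivative
  have e2 : fpderiv i.castSucc ((U1 * S - S * U1) - S)
      = ((fpderiv i.castSucc U1 * S + U1 * DS) - (DS * U1 + S * fpderiv i.castSucc U1))
        - DS := by
    rw [fpderiv_sub, fpderiv_sub, fpderiv_mul, fpderiv_mul]
  -- step 4: substitute hdtU1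
  have b2 : SMod m
      ((((fpderiv i.castSucc U1 * S + U1 * DS) - (DS * U1 + S * fpderiv i.castSucc U1))
        - DS) + DS + ((DS * U1 + Ti * Q) - (Q * Ti + U1 * DS)))
      ((((R0 * S + U1 * DS) - (DS * U1 + S * R0)) - DS) + DS
        + ((DS * U1 + Ti * Q) - (Q * Ti + U1 * DS))) :=
    ((((((hdtU1 i).mul_right S).add (SMod.refl (U1 * DS))).sub
      ((SMod.refl (DS * U1)).add ((hdtU1 i).mul_left S))).sub
        (SMod.refl DS)).add (SMod.refl DS)).add
          (SMod.refl ((DS * U1 + Ti * Q) - (Q * Ti + U1 * DS)))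
  -- step 5: Jacobi identity
  have e3 : (((R0 * S + U1 * DS) - (DS * U1 + S * R0)) - DS) + DS
      + ((DS * U1 + Ti * Q) - (Q * Ti + U1 * DS))
      = U0 * (Ti * S - S * Ti) - (Ti * S - S * Ti) * U0 := by
    rw [hQ, hR0]; noncomm_ring
  -- step 6: commutator hypothesis
  have hC : SMod m (Ti * S - S * Ti) 0 := by
    intro k hk
    have h1 := hST i k hk
    have h0 : (0 : MvPowerSeries (Fin (n + 1)) (Module.End R H)) k = 0 := rfl
    rw [mvps_sub_apply, h0, sub_eq_zero] at h1 ⊢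
    exact h1.symm
  have b3 : SMod m (U0 * (Ti * S - S * Ti) - (Ti * S - S * Ti) * U0) 0 :=
    ((hC.mul_left U0).sub (hC.mul_right U0)).trans
      (SMod.of_eq (by noncomm_ring))
  exact ((SMod.of_eq e1).trans b1).trans
    (((SMod.of_eq (by rw [e2])).trans b2).trans ((SMod.of_eq e3).trans b3))
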